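/- Let V₁, V₂ > 0 and suppose real numbers a'₁, a'₂ satisfy (a'₁)² V₁ + (a'₂)² V₂ = 1 + O(ε) and a'₁ V₁ + a'₂ V₂ = O(√ε) as ε → 0. Then, up to a common sign, a'₁ = a₁ + O(√ε) and a'₂ = a₂ + O(√ε), where a₁ = (1/V₁)√(V₁V₂/(V₁+V₂)) and a₂ = −(1/V₂)√(V₁V₂/(V₁+V₂)). -/

import Mathlib

set_option maxHeartbeats 800000


private lemma stmt4_aux (W Vi K M s e : ℝ) (hV : Vi ≤ W) (hVi : 0 ≤ Vi) (hW : 0 ≤ W)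
    (hM : 0 ≤ M) (hs : 0 ≤ s) (hes : e ≤ s) :
    K * s + Vi * (M * e) ≤ K * s + W * M * s + s * W := by
  nlinarith [mul_nonneg hVi hM, mul_nonneg hM hs, mul_nonneg hs hW,
    mul_le_mul_of_nonneg_left hes (mul_nonneg hVi hM),
    mul_le_mul_of_nonneg_right hV (mul_nonneg hM hs)]

/-- Stability of the eigenfunction-coefficient system: if
`(a'₁)²V₁ + (a'₂)²V₂ = 1 + O(ε)` and `a'₁V₁ + a'₂V₂ = O(√ε)`, then up to a
common sign `a'ᵢ = aᵢ + O(√ε)`, where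
`a₁ = (1/V₁)√(V₁V₂/(V₁+V₂))`, `a₂ = −(1/V₂)√(V₁V₂/(V₁+V₂))`. -/
theorem stmt_4 (V₁ V₂ K : ℝ) (h₁ : 0 < V₁) (h₂ : 0 < V₂) (hK : 0 < K) :
    ∃ C ε₀ : ℝ, 0 < C ∧ 0 < ε₀ ∧
      ∀ ε : ℝ, 0 < ε → ε ≤ ε₀ →
        ∀ a₁' a₂' : ℝ,
          |a₁' ^ 2 * V₁ + a₂' ^ 2 * V₂ - 1| ≤ K * ε →
          |a₁' * V₁ + a₂' * V₂| ≤ K * Real.sqrt ε →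
          ((|a₁' - (1 / V₁) * Real.sqrt (V₁ * V₂ / (V₁ + V₂))| ≤ C * Real.sqrt ε ∧
            |a₂' - (-(1 / V₂) * Real.sqrt (V₁ * V₂ / (V₁ + V₂)))| ≤ C * Real.sqrt ε) ∨
           (|a₁' + (1 / V₁) * Real.sqrt (V₁ * V₂ / (V₁ + V₂))| ≤ C * Real.sqrt ε ∧
            |a₂' + (-(1 / V₂) * Real.sqrt (V₁ * V₂ / (V₁ + V₂)))| ≤ C * Real.sqrt ε)) := by
  have hS : 0 < V₁ + V₂ := by linarith
  have hP : 0 < V₁ * V₂ := mul_pos h₁ h₂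
  set r : ℝ := Real.sqrt ((V₁ + V₂) / (V₁ * V₂)) with hr_def
  have hrpos : 0 < r := Real.sqrt_pos.mpr (div_pos hS hP)
  have hr2 : r ^ 2 = (V₁ + V₂) / (V₁ * V₂) := Real.sq_sqrt (div_pos hS hP).le
  have hsq : Real.sqrt (V₁ * V₂ / (V₁ + V₂)) = V₁ * V₂ / (V₁ + V₂) * r := by
    rw [show V₁ * V₂ / (V₁ + V₂) * r
        = Real.sqrt ((V₁ * V₂ / (V₁ + V₂)) ^ 2 * ((V₁ + V₂) / (V₁ * V₂))) from by
      rw [Real.sqrt_mul (sq_nonneg _), Real.sqrt_sq (by positivity)]]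
    congr 1
    field_simp
  set C₁ : ℝ := ((V₁ + V₂) * K + K ^ 2) / (V₁ * V₂) with hC₁_def
  have hC₁ : 0 < C₁ := by positivity
  set M : ℝ := C₁ / r with hM_def
  have hM : 0 < M := by positivity
  refine ⟨(K + (V₁ + V₂) * M) / (V₁ + V₂) + 1, 1, by positivity, one_pos, ?_⟩
  intro ε hε hε1 a₁' a₂' hQ hL
  set C : ℝ := (K + (V₁ + V₂) * M) / (V₁ + V₂) + 1 with hC_def
  have hs0 : 0 ≤ Real.sqrt ε := Real.sqrt_nonneg ε
  have hs2 : Real.sqrt ε ^ 2 = ε := Real.sq_sqrt hε.le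
  have hεle : ε ≤ Real.sqrt ε := by nlinarith [sq_nonneg (Real.sqrt ε - 1)]
  set d : ℝ := a₁' - a₂' with hd_def
  set L : ℝ := a₁' * V₁ + a₂' * V₂ with hL_def
  -- key identity
  have hid : (V₁ * V₂) * (d ^ 2 - r ^ 2) =
      (a₁' ^ 2 * V₁ + a₂' ^ 2 * V₂ - 1) * (V₁ + V₂) - L ^ 2 := by
    have hr2' : (V₁ * V₂) * r ^ 2 = V₁ + V₂ := by
      rw [hr2]; field_simp
    rw [hd_def, hL_def]
    linear_combination -hr2'
  have hL2 : L ^ 2 ≤ K ^ 2 * ε := by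
    have := abs_nonneg L
    nlinarith [hL, sq_abs L]
  have hdb : |d ^ 2 - r ^ 2| ≤ C₁ * ε := by
    rw [abs_le] at hQ ⊢
    have hup : (V₁ * V₂) * (d ^ 2 - r ^ 2) ≤ ((V₁ + V₂) * K + K ^ 2) * ε := by
      have := mul_le_mul_of_nonneg_right hQ.2 hS.le
      nlinarith [sq_nonneg L, sq_nonneg K, mul_pos hK hε]
    have hdn : -(((V₁ + V₂) * K + K ^ 2) * ε) ≤ (V₁ * V₂) * (d ^ 2 - r ^ 2) := by
      have := mul_le_mul_of_nonneg_right hQ.1 hS.le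
      nlinarith [hL2]
    constructor
    · rw [hC₁_def, div_mul_eq_mul_div, ← neg_div, div_le_iff₀ hP]
      linarith [hdn]
    · rw [hC₁_def, div_mul_eq_mul_div, le_div_iff₀ hP]
      linarith [hup]
  -- bound on |d ∓ r|
  have key : ∀ x : ℝ, |d - x| ≤ C₁ * ε / r → |d - x| ≤ M * ε := by
    intro x hx; rw [hM_def, div_mul_eq_mul_div]; exact hx.trans (le_of_eq (by ring))
  rcases le_or_gt 0 d with hd0 | hd0
  · -- d ≥ 0 : d close to r
    have hdr : |d - r| ≤ M * ε := by
      apply key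
      rw [le_div_iff₀ hrpos]
      calc |d - r| * r ≤ |d - r| * (d + r) := by
            apply mul_le_mul_of_nonneg_left (by linarith) (abs_nonneg _)
        _ = |d - r| * |d + r| := by rw [abs_of_nonneg (by linarith : (0:ℝ) ≤ d + r)]
        _ = |d ^ 2 - r ^ 2| := by rw [← abs_mul]; ring_nf
        _ ≤ C₁ * ε := hdb
    left
    constructor
    · have hident : a₁' - (1 / V₁) * Real.sqrt (V₁ * V₂ / (V₁ + V₂)) =
          (L + V₂ * (d - r)) / (V₁ + V₂) := by
        rw [hsq, hL_def, hd_def]; field_simp; ring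
      rw [hident, abs_div, abs_of_pos hS, div_le_iff₀ hS]
      have h7 : |L + V₂ * (d - r)| ≤ K * Real.sqrt ε + V₂ * (M * ε) := by
        calc |L + V₂ * (d - r)| ≤ |L| + |V₂ * (d - r)| := abs_add_le _ _
          _ = |L| + V₂ * |d - r| := by rw [abs_mul, abs_of_pos h₂]
          _ ≤ K * Real.sqrt ε + V₂ * (M * ε) := by gcongr
      refine h7.trans ?_
      rw [hC_def]
      have : ((K + (V₁ + V₂) * M) / (V₁ + V₂) + 1) * Real.sqrt ε * (V₁ + V₂)
          = K * Real.sqrt ε + (V₁ + V₂) * M * Real.sqrt ε + Real.sqrt ε * (V₁ + V₂) := by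
        field_simp
      rw [this]
      exact stmt4_aux (V₁ + V₂) V₂ K M _ ε (by linarith) h₂.le hS.le hM.le hs0 hεle
    · have hident : a₂' - (-(1 / V₂) * Real.sqrt (V₁ * V₂ / (V₁ + V₂))) =
          (L - V₁ * (d - r)) / (V₁ + V₂) := by
        rw [hsq, hL_def, hd_def]; field_simp; ring
      rw [hident, abs_div, abs_of_pos hS, div_le_iff₀ hS]
      have h7 : |L - V₁ * (d - r)| ≤ K * Real.sqrt ε + V₁ * (M * ε) := by
        calc |L - V₁ * (d - r)| ≤ |L| + |V₁ * (d - r)| := abs_sub _ _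
          _ = |L| + V₁ * |d - r| := by rw [abs_mul, abs_of_pos h₁]
          _ ≤ K * Real.sqrt ε + V₁ * (M * ε) := by gcongr
      refine h7.trans ?_
      rw [hC_def]
      have : ((K + (V₁ + V₂) * M) / (V₁ + V₂) + 1) * Real.sqrt ε * (V₁ + V₂)
          = K * Real.sqrt ε + (V₁ + V₂) * M * Real.sqrt ε + Real.sqrt ε * (V₁ + V₂) := by
        field_simp
      rw [this]
      exact stmt4_aux (V₁ + V₂) V₁ K M _ ε (by linarith) h₁.le hS.le hM.le hs0 hεle
  · -- d < 0 : d close to -r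
    have hdr : |d + r| ≤ M * ε := by
      have := key (-r)
      simp only [sub_neg_eq_add] at this
      apply this
      rw [le_div_iff₀ hrpos]
      calc |d + r| * r ≤ |d + r| * (r - d) := by
            apply mul_le_mul_of_nonneg_left (by linarith) (abs_nonneg _)
        _ = |d + r| * |d - r| := by
            rw [abs_of_neg (by linarith : d - r < 0)]; ring_nf
        _ = |d ^ 2 - r ^ 2| := by rw [← abs_mul]; ring_nf
        _ ≤ C₁ * ε := hdb
    right
    constructor
    · have hident : a₁' + (1 / V₁) * Real.sqrt (V₁ * V₂ / (V₁ + V₂)) =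
          (L + V₂ * (d + r)) / (V₁ + V₂) := by
        rw [hsq, hL_def, hd_def]; field_simp; ring
      rw [hident, abs_div, abs_of_pos hS, div_le_iff₀ hS]
      have h7 : |L + V₂ * (d + r)| ≤ K * Real.sqrt ε + V₂ * (M * ε) := by
        calc |L + V₂ * (d + r)| ≤ |L| + |V₂ * (d + r)| := abs_add_le _ _
          _ = |L| + V₂ * |d + r| := by rw [abs_mul, abs_of_pos h₂]
          _ ≤ K * Real.sqrt ε + V₂ * (M * ε) := by gcongr
      refine h7.trans ?_
      rw [hC_def]
      have : ((K + (V₁ + V₂) * M) / (V₁ + V₂) + 1) * Real.sqrt ε * (V₁ + V₂)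
          = K * Real.sqrt ε + (V₁ + V₂) * M * Real.sqrt ε + Real.sqrt ε * (V₁ + V₂) := by
        field_simp
      rw [this]
      exact stmt4_aux (V₁ + V₂) V₂ K M _ ε (by linarith) h₂.le hS.le hM.le hs0 hεle
    · have hident : a₂' + (-(1 / V₂) * Real.sqrt (V₁ * V₂ / (V₁ + V₂))) =
          (L - V₁ * (d + r)) / (V₁ + V₂) := by
        rw [hsq, hL_def, hd_def]; field_simp; ring
      rw [hident, abs_div, abs_of_pos hS, div_le_iff₀ hS]
      have h7 : |L - V₁ * (d + r)| ≤ K * Real.sqrt ε + V₁ * (M * ε) := by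
        calc |L - V₁ * (d + r)| ≤ |L| + |V₁ * (d + r)| := abs_sub _ _
          _ = |L| + V₁ * |d + r| := by rw [abs_mul, abs_of_pos h₁]
          _ ≤ K * Real.sqrt ε + V₁ * (M * ε) := by gcongr
      refine h7.trans ?_
      rw [hC_def]
      have : ((K + (V₁ + V₂) * M) / (V₁ + V₂) + 1) * Real.sqrt ε * (V₁ + V₂)
          = K * Real.sqrt ε + (V₁ + V₂) * M * Real.sqrt ε + Real.sqrt ε * (V₁ + V₂) := by
        field_simp
      rw [this]
      exact stmt4_aux (V₁ + V₂) V₁ K M _ ε (by linarith) h₁.le hS.le hM.le hs0 hεle
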